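/- Let q be a conjunctive query over a schema R and let Σ be a sticky set of TGDs over R in normal form. Then for every conjunctive query q′ obtainable from q by a finite sequence of rewriting and factorization steps (in particular, every q′ ∈ q_Σ = XRewrite(q,Σ)), every variable of var(q′) ∖ var(q) occurs exactly once in q′. -/

import Mathlib

namespace OntDB

/-- Terms: constants, labeled nulls, and variables (each indexed by naturals). -/
inductive Term : Type
  | const : ℕ → Term
  | null  : ℕ → Term
  | var   : ℕ → Term
deriving DecidableEq

/-- a term is not a labeled null -/
def Term.noNull : Term → Prop
  | .null _ => False
  | _ => True

/-- Atoms: a predicate symbol applied to a list of argument terms. -/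
structure Atom : Type where
  pred : ℕ
  args : List Term
deriving DecidableEq

/-- A relational schema: a finite set of predicate symbols, each with an arity. -/
structure Schema : Type where
  preds : Finset ℕ
  ar : ℕ → ℕ

/-- arity(R) : the maximum arity over the predicates of R -/
def Schema.maxArity (R : Schema) : ℕ := R.preds.sup R.ar

def Atom.overSchema (R : Schema) (a : Atom) : Prop :=
  a.pred ∈ R.preds ∧ a.args.length = R.ar a.pred

/-- applying a substitution to an atom -/
def Atom.subst (h : Term → Term) (a : Atom) : Atom := ⟨a.pred, a.args.map h⟩

/-- a substitution fixes every constant -/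
def constFix (h : Term → Term) : Prop := ∀ c, h (Term.const c) = Term.const c

/-- A homomorphism from the set of atoms `A` to the set of atoms `A'`. -/
def IsHom (h : Term → Term) (A A' : Set Atom) : Prop :=
  constFix h ∧ ∀ a ∈ A, a.subst h ∈ A'

/-- the variables occurring in an atom -/
def Atom.vars (a : Atom) : Finset ℕ :=
  (a.args.filterMap (fun t => match t with | .var v => some v | _ => none)).toFinset

/-- the number of occurrences of the variable `v` in the atom `a` -/
def Atom.countVar (a : Atom) (v : ℕ) : ℕ := a.args.count (Term.var v)

/-- the variables occurring in a finite set of atoms -/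
def varsOfSet (S : Finset Atom) : Finset ℕ := S.sup Atom.vars

/-- A conjunctive query: a head atom together with a finite set of body atoms. -/
structure CQ : Type where
  head : Atom
  body : Finset Atom
deriving DecidableEq

/-- the variables occurring in a CQ (head and body) -/
def CQ.vars (q : CQ) : Finset ℕ := q.head.vars ∪ varsOfSet q.body

/-- the number of occurrences of the variable `v` in the CQ `q` (head and body) -/
def CQ.countVar (q : CQ) (v : ℕ) : ℕ := q.head.countVar v + ∑ a ∈ q.body, a.countVar v

/-- a variable is shared in `q` if it occurs more than once in `q` -/
def CQ.shared (q : CQ) (v : ℕ) : Prop := 2 ≤ q.countVar v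

/-- a CQ over a schema: body atoms over the schema, and no labeled nulls occur -/
def CQ.overSchema (R : Schema) (q : CQ) : Prop :=
  (∀ a ∈ q.body, a.overSchema R ∧ ∀ t ∈ a.args, t.noNull) ∧ ∀ t ∈ q.head.args, t.noNull

/-- a tuple of constants -/
def isConstTuple (t : List Term) : Prop := ∀ s ∈ t, ∃ c, s = Term.const c

/-- Evaluation of a CQ over an instance: the tuples of constants obtained as images
of the distinguished terms under homomorphisms of the body into the instance. -/
def CQ.eval (q : CQ) (I : Set Atom) : Set (List Term) :=
  { t | isConstTuple t ∧ ∃ h : Term → Term, IsHom h ↑q.body I ∧ q.head.args.map h = t }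

/-- evaluation of a (possibly infinite) union of CQs -/
def ucqEval (Q : Set CQ) (I : Set Atom) : Set (List Term) := ⋃ q ∈ Q, q.eval I

/-- A TGD (in normal form representation): a finite set of body atoms plus a single
head atom; the existentially quantified variables are exactly the head variables
that do not occur in the body. -/
structure TGD : Type where
  body : Finset Atom
  head : Atom
deriving DecidableEq

/-- the universally quantified variables occurring in the head -/
def TGD.frontier (σ : TGD) : Finset ℕ := varsOfSet σ.body ∩ σ.head.vars

/-- the existentially quantified variables -/
def TGD.exVars (σ : TGD) : Finset ℕ := σ.head.vars \ varsOfSet σ.body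

def TGD.vars (σ : TGD) : Finset ℕ := varsOfSet σ.body ∪ σ.head.vars

/-- normal form: at most one existentially quantified variable, occurring once -/
def TGD.NormalForm (σ : TGD) : Prop :=
  σ.exVars.card ≤ 1 ∧ ∀ v ∈ σ.exVars, σ.head.countVar v = 1

/-- a TGD is linear if its body consists of a single atom -/
def TGD.Linear (σ : TGD) : Prop := σ.body.card = 1

/-- a set of TGDs is linear if all its members are -/
def LinearSet (Sig : Finset TGD) : Prop := ∀ σ ∈ Sig, σ.Linear

def TGD.overSchema (R : Schema) (σ : TGD) : Prop :=
  σ.body.Nonempty ∧ (∀ a ∈ σ.body, a.overSchema R ∧ ∀ t ∈ a.args, t.noNull) ∧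
  σ.head.overSchema R ∧ ∀ t ∈ σ.head.args, t.noNull

/-- satisfaction of a TGD by an instance -/
def TGD.sat (σ : TGD) (I : Set Atom) : Prop :=
  ∀ h : Term → Term, IsHom h ↑σ.body I →
    ∃ h' : Term → Term, constFix h' ∧
      (∀ v ∈ σ.frontier, h' (Term.var v) = h (Term.var v)) ∧ σ.head.subst h' ∈ I

/-- satisfaction of a set of TGDs -/
def satSet (Sig : Finset TGD) (I : Set Atom) : Prop := ∀ σ ∈ Sig, σ.sat I

/-- a database for a schema: a finite set of atoms over the schema whose
arguments are constants -/
def IsDatabase (R : Schema) (D : Finset Atom) : Prop :=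
  ∀ a ∈ D, a.overSchema R ∧ ∀ t ∈ a.args, ∃ c, t = Term.const c

/-- the certain answers of a CQ w.r.t. a database and a set of TGDs -/
def certAns (q : CQ) (D : Finset Atom) (Sig : Finset TGD) : Set (List Term) :=
  { t | ∀ I : Set Atom, ↑D ⊆ I → satSet Sig I → t ∈ q.eval I }

/-- the certain answers of a (possibly infinite) union of CQs -/
def certAnsUCQ (Q : Set CQ) (D : Finset Atom) (Sig : Finset TGD) : Set (List Term) :=
  { t | ∀ I : Set Atom, ↑D ⊆ I → satSet Sig I → t ∈ ucqEval Q I }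

/-- a unifier for a finite set of atoms -/
def IsUnifier (γ : Term → Term) (S : Finset Atom) : Prop :=
  constFix γ ∧ ∀ a ∈ S, ∀ b ∈ S, a.subst γ = b.subst γ

def Unifies (S : Finset Atom) : Prop := ∃ γ, IsUnifier γ S

/-- most general unifier -/
def IsMGU (γ : Term → Term) (S : Finset Atom) : Prop :=
  IsUnifier γ S ∧ ∀ γ', IsUnifier γ' S → ∃ δ : Term → Term, ∀ t, γ' t = δ (γ t)

/-- `i` is the position of the existentially quantified variable in head(σ) -/
def TGD.exPos (σ : TGD) (i : ℕ) : Prop :=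
  ∃ z ∈ σ.exVars, σ.head.args[i]? = some (Term.var z)

/-- applicability of the TGD σ to the set S ⊆ body(q) -/
def Applicable (q : CQ) (σ : TGD) (S : Finset Atom) : Prop :=
  S.Nonempty ∧ S ⊆ q.body ∧ Unifies (S ∪ {σ.head}) ∧
  ∀ a ∈ S, ∀ i, σ.exPos i →
    (∀ c, a.args[i]? ≠ some (Term.const c)) ∧
    ∀ v, a.args[i]? = some (Term.var v) → ¬ q.shared v

/-- factorizability of the set S ⊆ body(q) w.r.t. the TGD σ -/
def Factorizable (q : CQ) (σ : TGD) (S : Finset Atom) : Prop :=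
  S ⊆ q.body ∧ 2 ≤ S.card ∧ Unifies S ∧ (∃ i, σ.exPos i) ∧
  ∃ V : ℕ, V ∉ varsOfSet (q.body \ S) ∧
    ∀ a ∈ S, (∃ i, σ.exPos i ∧ a.args[i]? = some (Term.var V)) ∧
      ∀ j, a.args[j]? = some (Term.var V) → σ.exPos j

/-- renaming of variables -/
def renT (ρ : ℕ → ℕ) : Term → Term
  | .var v => .var (ρ v)
  | t => t

/-- renaming the variables of a TGD -/
def TGD.rename (σ : TGD) (ρ : ℕ → ℕ) : TGD :=
  ⟨σ.body.image (Atom.subst (renT ρ)), σ.head.subst (renT ρ)⟩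

/-- applying a substitution to a CQ -/
def CQ.subst (q : CQ) (γ : Term → Term) : CQ :=
  ⟨q.head.subst γ, q.body.image (Atom.subst γ)⟩

/-- the restriction on MGUs used by XRewrite under sticky sets of TGDs:
every variable of the protected set `W` (the variables of the input query) is
mapped to a variable of `W` (or to a constant).  For `W = ∅` no restriction. -/
def ProtectsVars (W : Finset ℕ) (γ : Term → Term) : Prop :=
  ∀ v ∈ W, (∃ u ∈ W, γ (Term.var v) = Term.var u) ∨ ∃ c, γ (Term.var v) = Term.const c

/-- the substitution is the identity on all variables outside `V` -/
def IdOutside (V : Finset ℕ) (γ : Term → Term) : Prop :=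
  ∀ v, v ∉ V → γ (Term.var v) = Term.var v

/-- one rewriting step of XRewrite (applied to `q`, producing `q'`) -/
def IsRewriteStep (Sig : Finset TGD) (W : Finset ℕ) (q q' : CQ) : Prop :=
  ∃ σ ∈ Sig, ∃ ρ : ℕ → ℕ, Function.Injective ρ ∧ (∀ v, ρ v ∉ q.vars) ∧
    ∃ S : Finset Atom, Applicable q (σ.rename ρ) S ∧
      ∃ γ : Term → Term, IsMGU γ (S ∪ {(σ.rename ρ).head}) ∧
        IdOutside (varsOfSet (S ∪ {(σ.rename ρ).head})) γ ∧ ProtectsVars W γ ∧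
        q' = (CQ.mk q.head ((q.body \ S) ∪ (σ.rename ρ).body)).subst γ

/-- one factorization step of XRewrite -/
def IsFactStep (Sig : Finset TGD) (W : Finset ℕ) (q q' : CQ) : Prop :=
  ∃ σ ∈ Sig, ∃ S : Finset Atom, Factorizable q σ S ∧
    ∃ γ : Term → Term, IsMGU γ S ∧ IdOutside (varsOfSet S) γ ∧ ProtectsVars W γ ∧
      q' = q.subst γ

/-- the CQs obtainable from q by a finite sequence of rewriting and
factorization steps -/
inductive Reach (Sig : Finset TGD) (W : Finset ℕ) (q : CQ) : CQ → Prop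
  | refl : Reach Sig W q q
  | rw {p p' : CQ} : Reach Sig W q p → IsRewriteStep Sig W p p' → Reach Sig W q p'
  | fact {p p' : CQ} : Reach Sig W q p → IsFactStep Sig W p p' → Reach Sig W q p'

/-- the output of XRewrite(q,Σ): q together with all CQs obtainable from q by a
finite sequence of rewriting and factorization steps whose last step is a
rewriting step -/
def XRewriteOut (Sig : Finset TGD) (W : Finset ℕ) (q : CQ) : Set CQ :=
  {q} ∪ { p' | ∃ p : CQ, Reach Sig W q p ∧ IsRewriteStep Sig W p p' }

/-- two CQs are the same up to bijective variable renaming -/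
def CQEquiv (p p' : CQ) : Prop :=
  ∃ ρ : ℕ → ℕ, Function.Bijective ρ ∧ p.subst (renT ρ) = p'

/-- the SMarking procedure: `Marked Sig σ v` says that the body variable `v` of
σ gets marked -/
inductive Marked (Sig : Finset TGD) : TGD → ℕ → Prop
  | init {σ : TGD} {v : ℕ} : σ ∈ Sig → v ∈ varsOfSet σ.body → v ∉ σ.head.vars →
      Marked Sig σ v
  | prop {σ σ' : TGD} {v : ℕ} (b : Atom) (u : ℕ → ℕ) : σ ∈ Sig → σ' ∈ Sig →
      v ∈ varsOfSet σ.body → v ∈ σ.head.vars → b ∈ σ'.body →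
      (∀ i : ℕ, σ.head.args[i]? = some (Term.var v) →
        b.args[i]? = some (Term.var (u i))) →
      (∀ i : ℕ, σ.head.args[i]? = some (Term.var v) → Marked Sig σ' (u i)) →
      Marked Sig σ v

/-- a set of TGDs is sticky if every marked variable occurs only once in the
body of its TGD -/
def Sticky (Sig : Finset TGD) : Prop :=
  ∀ σ ∈ Sig, ∀ v : ℕ, Marked Sig σ v → (∑ a ∈ σ.body, a.countVar v) = 1

/- ## Propagation graph and atom coverage -/

/-- a position of a schema: a predicate together with an argument index -/
abbrev Pos := ℕ × ℕ

/-- the edges of the propagation graph -/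
def PGEdge (σ : TGD) (pb ph : Pos) : Prop :=
  ∃ b ∈ σ.body, ∃ v : ℕ,
    b.pred = pb.1 ∧ b.args[pb.2]? = some (Term.var v) ∧
    σ.head.pred = ph.1 ∧ σ.head.args[ph.2]? = some (Term.var v)

/-- `vs` is a path in the propagation graph of Σ with edge labels `ls` -/
def IsPath (Sig : Finset TGD) (vs : List Pos) (ls : List TGD) : Prop :=
  vs.length = ls.length + 1 ∧
  ∀ j < ls.length, ∃ σ pb ph,
    ls[j]? = some σ ∧ vs[j]? = some pb ∧ vs[j + 1]? = some ph ∧ σ ∈ Sig ∧ PGEdge σ pb ph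

/-- a minimal path: no cycle is traversed twice consecutively -/
def MinimalPath (Sig : Finset TGD) (vs : List Pos) (ls : List TGD) : Prop :=
  IsPath Sig vs ls ∧
  ¬ ∃ i j : ℕ, 0 < i ∧ i + 1 < vs.length ∧ 0 < j ∧ j ≤ i ∧ i + j < vs.length ∧
      (∀ k ≤ j, vs[i - j + k]? = vs[i + k]?) ∧ ∀ k < j, ls[i - j + k]? = ls[i + k]?

/-- a tight sequence of (linear) TGDs -/
def TightSeq (σs : List TGD) : Prop :=
  ∀ j, j + 1 < σs.length →
    ∃ σ1 σ2, σs[j]? = some σ1 ∧ σs[j + 1]? = some σ2 ∧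
      ∃ h : Term → Term, constFix h ∧ σ2.body.image (Atom.subst h) = {σ1.head}

/-- a sequence of TGDs compatible to an atom -/
def CompatibleTo (σs : List TGD) (a : Atom) : Prop :=
  ∃ σ1, σs[0]? = some σ1 ∧ ∃ h : Term → Term, constFix h ∧
    σ1.body.image (Atom.subst h) = {a}

/-- pos(a,t): the positions (indices) at which the term t occurs in the atom a -/
def atomPos (a : Atom) (t : Term) : Set ℕ := { i | a.args[i]? = some t }

/-- T(q,a): the constants of a together with the variables of a shared in q -/
def Tq (q : CQ) (a : Atom) : Set Term :=
  { t | t ∈ a.args ∧ ((∃ c, t = Term.const c) ∨ ∃ v, t = Term.var v ∧ q.shared v) }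

/-- atom coverage: a covers b w.r.t. q and Σ -/
def Covers (Sig : Finset TGD) (q : CQ) (a b : Atom) : Prop :=
  (∀ t ∈ Tq q b, t ∈ a.args) ∧
  ∃ σs : List TGD, σs ≠ [] ∧ (∀ σ ∈ σs, σ ∈ Sig) ∧ TightSeq σs ∧ CompatibleTo σs a ∧
    ∀ t ∈ Tq q b, ∀ i ∈ atomPos b t,
      ∃ vs : List Pos, MinimalPath Sig vs σs ∧
        (∃ p0 : Pos, vs[0]? = some p0 ∧ p0.1 = a.pred ∧ p0.2 ∈ atomPos a t) ∧
        vs[vs.length - 1]? = some (b.pred, i)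


/- ## Auxiliary machinery for STATEMENT 1 -/

open Classical in
/-- a term is *bad* (w.r.t. a protected variable set `W`): a null, or a
variable outside `W` -/
def BadT (W : Finset ℕ) : Term → Prop
  | .const _ => False
  | .null _ => True
  | .var v => v ∉ W

lemma badT_cases {W : Finset ℕ} {t : Term} (h : BadT W t) :
    (∃ v, t = Term.var v ∧ v ∉ W) ∨ ∃ m, t = Term.null m := by
  cases t with
  | const c => exact absurd h (by simp [BadT])
  | null m => exact Or.inr ⟨m, rfl⟩
  | var v => exact Or.inl ⟨v, rfl, h⟩

lemma var_mem_vars {a : Atom} {v : ℕ} : v ∈ a.vars ↔ Term.var v ∈ a.args := by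
  simp only [Atom.vars, List.mem_toFinset, List.mem_filterMap]
  constructor
  · rintro ⟨t, ht, he⟩
    cases t <;> simp_all
  · intro h; exact ⟨_, h, rfl⟩

lemma mem_varsOfSet {M : Finset Atom} {v : ℕ} :
    v ∈ varsOfSet M ↔ ∃ a ∈ M, Term.var v ∈ a.args := by
  simp only [varsOfSet, Finset.mem_sup, var_mem_vars]

lemma subst_args {γ : Term → Term} {a : Atom} : (a.subst γ).args = a.args.map γ := rfl

lemma subst_getElem? {γ : Term → Term} {a : Atom} {i : ℕ} :
    (a.subst γ).args[i]? = a.args[i]?.map γ := by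
  simp [Atom.subst, List.getElem?_map]

lemma two_le_count_of_pos {l : List Term} {t : Term} {i j : ℕ} (hij : i ≠ j)
    (hi : l[i]? = some t) (hj : l[j]? = some t) : 2 ≤ l.count t := by
  induction l generalizing i j with
  | nil => simp at hi
  | cons hd tl ih =>
    cases i with
    | zero =>
      cases j with
      | zero => exact absurd rfl hij
      | succ j =>
        have ht : hd = t := by simpa using hi
        have hmem : t ∈ tl := List.mem_iff_getElem?.2 ⟨j, by simpa using hj⟩
        have h1 : 0 < tl.count t := List.count_pos_iff.2 hmem
        have h2 : (hd :: tl).count t = tl.count t + 1 := by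
          rw [ht]; exact List.count_cons_self ..
        omega
    | succ i =>
      cases j with
      | zero =>
        have ht : hd = t := by simpa using hj
        have hmem : t ∈ tl := List.mem_iff_getElem?.2 ⟨i, by simpa using hi⟩
        have h1 : 0 < tl.count t := List.count_pos_iff.2 hmem
        have h2 : (hd :: tl).count t = tl.count t + 1 := by
          rw [ht]; exact List.count_cons_self ..
        omega
      | succ j =>
        have h2 := ih (i := i) (j := j) (by omega) (by simpa using hi) (by simpa using hj)
        have hle : tl.count t ≤ (hd :: tl).count t := by
          rw [List.count_cons]; omega
        omega

lemma exists_two_pos_of_two_le_count {l : List Term} {t : Term} (h : 2 ≤ l.count t) :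
    ∃ i j : ℕ, i ≠ j ∧ l[i]? = some t ∧ l[j]? = some t := by
  induction l with
  | nil => simp at h
  | cons hd tl ih =>
    by_cases hht : t = hd
    · subst hht
      have h1 : 1 ≤ tl.count t := by
        have : (t :: tl).count t = tl.count t + 1 := List.count_cons_self ..
        omega
      have hmem : t ∈ tl := List.count_pos_iff.1 (by omega)
      obtain ⟨i, hi⟩ := List.mem_iff_getElem?.1 hmem
      exact ⟨0, i+1, by omega, by simp, by simpa using hi⟩
    · have h2 : 2 ≤ tl.count t := by
        simp [List.count_cons, hht] at h ⊢
        simpa [Ne.symm hht] using h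
      obtain ⟨i, j, hij, hi, hj⟩ := ih h2
      exact ⟨i+1, j+1, by omega, by simpa using hi, by simpa using hj⟩

lemma count_pos_of_pos {l : List Term} {t : Term} {i : ℕ} (hi : l[i]? = some t) :
    1 ≤ l.count t :=
  List.count_pos_iff.2 (List.mem_iff_getElem?.2 ⟨i, hi⟩)

/-- from a bound `≤ 1` on the total number of occurrences, any two occurrences
(of the term `T` in the atoms of `M`) coincide -/
lemma sum_unique_of_le_one {M : Finset Atom} {T : Term}
    (h : ∑ a ∈ M, a.args.count T ≤ 1) :
    ∀ a ∈ M, ∀ a' ∈ M, ∀ i i' : ℕ, a.args[i]? = some T → a'.args[i']? = some T →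
      a = a' ∧ i = i' := by
  intro a ha a' ha' i i' hi hi'
  by_cases hA : a = a'
  · subst hA
    refine ⟨rfl, ?_⟩
    by_contra hij
    have h2 : 2 ≤ a.args.count T := two_le_count_of_pos hij hi hi'
    have hb : a.args.count T ≤ ∑ a ∈ M, a.args.count T :=
      Finset.single_le_sum (f := fun x : Atom => x.args.count T) (fun i _ => Nat.zero_le _) ha
    omega
  · exfalso
    have hsub : ({a, a'} : Finset Atom) ⊆ M := by
      intro x hx; simp at hx; rcases hx with rfl | rfl <;> assumption
    have hb : ∑ x ∈ ({a, a'} : Finset Atom), x.args.count T ≤ ∑ x ∈ M, x.args.count T :=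
      Finset.sum_le_sum_of_subset hsub
    rw [Finset.sum_pair hA] at hb
    have c1 := count_pos_of_pos hi
    have c2 := count_pos_of_pos hi'
    omega

/-- conversely, if any two occurrences coincide then the total count is `≤ 1` -/
lemma sum_le_one_of_unique {M : Finset Atom} {T : Term}
    (h : ∀ a ∈ M, ∀ a' ∈ M, ∀ i i' : ℕ, a.args[i]? = some T → a'.args[i']? = some T →
      a = a' ∧ i = i') :
    ∑ a ∈ M, a.args.count T ≤ 1 := by
  by_cases hex : ∃ a ∈ M, T ∈ a.args
  · obtain ⟨a₀, ha₀, hmem⟩ := hex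
    obtain ⟨i₀, hi₀⟩ := List.mem_iff_getElem?.1 hmem
    have hz : ∀ b ∈ M, b ≠ a₀ → b.args.count T = 0 := by
      intro b hb hne
      by_contra hc
      have hpos : 0 < b.args.count T := by omega
      obtain ⟨j, hj⟩ := List.mem_iff_getElem?.1 (List.count_pos_iff.1 hpos)
      exact hne (h b hb a₀ ha₀ j i₀ hj hi₀).1
    rw [Finset.sum_eq_single_of_mem a₀ ha₀ hz]
    by_contra hc
    obtain ⟨i, j, hij, hi, hj⟩ :=
      exists_two_pos_of_two_le_count (l := a₀.args) (t := T) (by omega)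
    exact hij (h a₀ ha₀ a₀ ha₀ i j hi hj).2
  · push_neg at hex
    rw [Finset.sum_eq_zero]
    · omega
    · intro a ha; exact List.count_eq_zero.2 (hex a ha)

/- ## most general unifiers merge only what every unifier must merge -/

attribute [local instance] Classical.propDecidable

noncomputable def spick (s : Set Term) : Term :=
  if h : ∃ x, x ∈ s then h.choose else Term.const 0

lemma spick_mem {s : Set Term} (h : ∃ x, x ∈ s) : spick s ∈ s := by
  rw [spick, dif_pos h]; exact h.choose_spec

noncomputable def pickF (F : Term → Term → Prop) (t : Term) : Term :=
  if h : ∃ c, F t (Term.const c) then Term.const h.choose else spick {x | F t x}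

section PickF

variable {F : Term → Term → Prop}

lemma pickF_rel (hrefl : ∀ t, F t t) (t : Term) : F t (pickF F t) := by
  rw [pickF]
  split
  · next h => exact h.choose_spec
  · exact spick_mem ⟨t, hrefl t⟩

lemma pickF_congr (hsymm : ∀ t t', F t t' → F t' t)
    (htrans : ∀ t₁ t₂ t₃, F t₁ t₂ → F t₂ t₃ → F t₁ t₃)
    (hconst : ∀ c c', F (Term.const c) (Term.const c') → c = c')
    {t t' : Term} (htt' : F t t') : pickF F t = pickF F t' := by
  by_cases h1 : ∃ c, F t (Term.const c)
  · have h2 : ∃ c, F t' (Term.const c) := by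
      obtain ⟨c, hc⟩ := h1; exact ⟨c, htrans _ _ _ (hsymm _ _ htt') hc⟩
    rw [pickF, dif_pos h1, pickF, dif_pos h2]
    have hc1 := h1.choose_spec
    have hc2 := h2.choose_spec
    have : F (Term.const h1.choose) (Term.const h2.choose) :=
      htrans _ _ _ (hsymm _ _ hc1) (htrans _ _ _ htt' hc2)
    rw [hconst _ _ this]
  · have h2 : ¬ ∃ c, F t' (Term.const c) := by
      rintro ⟨c, hc⟩; exact h1 ⟨c, htrans _ _ _ htt' hc⟩
    rw [pickF, dif_neg h1, pickF, dif_neg h2]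
    congr 1
    ext x
    exact ⟨fun hx => htrans _ _ _ (hsymm _ _ htt') hx, fun hx => htrans _ _ _ htt' hx⟩

lemma pickF_eq_imp (hrefl : ∀ t, F t t) (hsymm : ∀ t t', F t t' → F t' t)
    (htrans : ∀ t₁ t₂ t₃, F t₁ t₂ → F t₂ t₃ → F t₁ t₃)
    {t t' : Term} (h : pickF F t = pickF F t') : F t t' := by
  have h1 := pickF_rel hrefl t
  have h2 := pickF_rel hrefl t'
  rw [h] at h1
  exact htrans _ _ _ h1 (hsymm _ _ h2)

lemma pickF_const (hrefl : ∀ t, F t t)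
    (hconst : ∀ c c', F (Term.const c) (Term.const c') → c = c')
    (c : ℕ) : pickF F (Term.const c) = Term.const c := by
  have h1 : ∃ c', F (Term.const c) (Term.const c') := ⟨c, hrefl _⟩
  rw [pickF, dif_pos h1]
  exact congrArg Term.const (hconst _ _ h1.choose_spec).symm

end PickF

/-- two atoms that are unified by a unifier have the same predicate and arity,
and the unifier identifies the argument lists pointwise -/
lemma unif_pt {γ : Term → Term} {a a' : Atom} (hab : a.subst γ = a'.subst γ) :
    a.pred = a'.pred ∧ a.args.length = a'.args.length ∧
      ∀ i : ℕ, ∀ t t', a.args[i]? = some t → a'.args[i]? = some t' → γ t = γ t' := by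
  have hpred : a.pred = a'.pred := by
    have := congrArg Atom.pred hab; simpa [Atom.subst] using this
  have hargs : a.args.map γ = a'.args.map γ := by
    have := congrArg Atom.args hab; simpa [Atom.subst] using this
  have hlen : a.args.length = a'.args.length := by
    have := congrArg List.length hargs; simpa using this
  refine ⟨hpred, hlen, fun i t t' ht ht' => ?_⟩
  have h1 : (a.args.map γ)[i]? = some (γ t) := by rw [List.getElem?_map, ht]; rfl
  have h2 : (a'.args.map γ)[i]? = some (γ t') := by rw [List.getElem?_map, ht']; rfl
  rw [hargs, h2] at h1
  exact (Option.some.injEq _ _ ▸ h1).symm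

/-- key property of MGUs: if a reflexive, symmetric, transitive relation `F`
relates all pairs of terms occurring at the same position of atoms in `U`, and
`F` is contained in the kernel of `γ`, then the kernel of any MGU `γ` of `U` is
contained in `F`. -/
lemma mgu_kern {γ : Term → Term} {U : Finset Atom} (hmgu : IsMGU γ U)
    {F : Term → Term → Prop}
    (hrefl : ∀ t, F t t) (hsymm : ∀ t t', F t t' → F t' t)
    (htrans : ∀ t₁ t₂ t₃, F t₁ t₂ → F t₂ t₃ → F t₁ t₃)
    (hsub : ∀ t t', F t t' → γ t = γ t')
    (hcol : ∀ a ∈ U, ∀ a' ∈ U, ∀ i : ℕ, ∀ t t', a.args[i]? = some t →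
      a'.args[i]? = some t' → F t t')
    {t t' : Term} (heq : γ t = γ t') : F t t' := by
  have hconst : ∀ c c', F (Term.const c) (Term.const c') → c = c' := by
    intro c c' hcc
    have := hsub _ _ hcc
    rw [hmgu.1.1 c, hmgu.1.1 c'] at this
    exact Term.const.injEq _ _ ▸ this
  have hβu : IsUnifier (pickF F) U := by
    constructor
    · exact pickF_const hrefl hconst
    · intro a ha b hb
      obtain ⟨hpred, hlen, hpt⟩ := unif_pt (hmgu.1.2 a ha b hb)
      show Atom.mk _ _ = Atom.mk _ _
      rw [Atom.mk.injEq]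
      refine ⟨hpred, List.ext_getElem? fun i => ?_⟩
      rw [List.getElem?_map, List.getElem?_map]
      by_cases hi : i < a.args.length
      · obtain ⟨t1, h1⟩ : ∃ t1, a.args[i]? = some t1 := ⟨_, List.getElem?_eq_getElem hi⟩
        obtain ⟨t2, h2⟩ : ∃ t2, b.args[i]? = some t2 :=
          ⟨_, List.getElem?_eq_getElem (by omega)⟩
        rw [h1, h2]
        simp only [Option.map_some]
        rw [pickF_congr hsymm htrans hconst (hcol a ha b hb i t1 t2 h1 h2)]
      · rw [List.getElem?_eq_none (l := a.args) (by omega),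
          List.getElem?_eq_none (l := b.args) (by omega)]
  obtain ⟨δ, hδ⟩ := hmgu.2 (pickF F) hβu
  have : pickF F t = pickF F t' := by rw [hδ t, hδ t', heq]
  exact pickF_eq_imp hrefl hsymm htrans this

/- ## the invariant maintained along XRewrite -/

/-- the invariant: no bad term occurs in the head, every bad term occurs at most
once in the body, and each atom carrying bad terms is supported by a body atom
of some TGD carrying marked variables at the corresponding positions -/
def Inv (Sig : Finset TGD) (W : Finset ℕ) (p : CQ) : Prop :=
  (∀ t ∈ p.head.args, ¬ BadT W t) ∧
  (∀ T : Term, BadT W T → ∑ a ∈ p.body, a.args.count T ≤ 1) ∧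
  (∀ a ∈ p.body, (∃ (j : ℕ) (t : Term), a.args[j]? = some t ∧ BadT W t) →
    ∃ σ' ∈ Sig, ∃ b ∈ σ'.body, ∀ (j : ℕ) (t : Term), a.args[j]? = some t → BadT W t →
      ∃ w, b.args[j]? = some (Term.var w) ∧ Marked Sig σ' w)

/-- anchor relation: `t` occurs at a position of an atom of `U` at which the
head `H` carries the variable `w` -/
def AnchT (U : Finset Atom) (H : Atom) (t : Term) (w : ℕ) : Prop :=
  ∃ (i : ℕ), ∃ a ∈ U, a.args[i]? = some t ∧ H.args[i]? = some (Term.var w)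

/-- the over-approximation of the kernel of the MGU used in a rewriting step -/
def FR (W : Finset ℕ) (γ : Term → Term) (U : Finset Atom) (H : Atom) (t t' : Term) : Prop :=
  γ t = γ t' ∧ (t = t' ∨ ¬ BadT W (γ t) ∨ ∃ w, AnchT U H t w ∧ AnchT U H t' w)

lemma renT_eq_var {ρ : ℕ → ℕ} (hρ : Function.Injective ρ) {t : Term} {w : ℕ}
    (h : renT ρ t = Term.var (ρ w)) : t = Term.var w := by
  cases t with
  | const c => exact absurd h (by simp [renT])
  | null m => exact absurd h (by simp [renT])
  | var u =>
    simp only [renT, Term.var.injEq] at h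
    rw [hρ h]

lemma inv_rewrite {Sig : Finset TGD} {W : Finset ℕ} {p p' : CQ}
    (hno : ∀ σ ∈ Sig, (∀ a ∈ σ.body, ∀ t ∈ a.args, t.noNull) ∧
      ∀ t ∈ σ.head.args, t.noNull)
    (hsticky : Sticky Sig)
    (hinv : Inv Sig W p)
    (hstep : IsRewriteStep Sig W p p') : Inv Sig W p' := by
  classical
  obtain ⟨σ, hσ, ρ, hρinj, hρp, S, happ, γ, hmgu, hid, hprot, hq'⟩ := hstep
  set H : Atom := (σ.rename ρ).head with hH
  set U : Finset Atom := S ∪ {H} with hU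
  have hcf : constFix γ := hmgu.1.1
  have hSne : S.Nonempty := happ.1
  have hSsub : S ⊆ p.body := happ.2.1
  have hHU : H ∈ U := Finset.mem_union_right _ (Finset.mem_singleton_self H)
  have hUmem : ∀ a, a ∈ U → a ∈ S ∨ a = H := by
    intro a ha
    rcases Finset.mem_union.1 ha with h | h
    · exact Or.inl h
    · exact Or.inr (Finset.mem_singleton.1 h)
  -- the terms of H are constants or ρ-variables
  have hHargs : ∀ t ∈ H.args, (∃ c, t = Term.const c) ∨
      ∃ w, t = Term.var (ρ w) ∧ Term.var w ∈ σ.head.args := by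
    intro t ht
    have : H.args = σ.head.args.map (renT ρ) := rfl
    rw [this] at ht
    obtain ⟨s, hs, rfl⟩ := List.mem_map.1 ht
    cases s with
    | const c => exact Or.inl ⟨c, rfl⟩
    | null m => exact absurd ((hno σ hσ).2 _ hs) (by simp [Term.noNull])
    | var w => exact Or.inr ⟨w, rfl, hs⟩
  -- variables of body atoms of p are variables of p
  have hpbodyvar : ∀ a ∈ p.body, ∀ u : ℕ, Term.var u ∈ a.args → u ∈ p.vars := by
    intro a ha u hu
    exact Finset.mem_union_right _ (mem_varsOfSet.2 ⟨a, ha, hu⟩)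
  -- badness is reflected by γ
  have hBad_pre : ∀ t, BadT W (γ t) → BadT W t := by
    intro t hbt
    cases t with
    | const c => rw [hcf c] at hbt; exact absurd hbt (by simp [BadT])
    | null m => simp [BadT]
    | var u =>
      simp only [BadT]
      intro huW
      rcases hprot u huW with ⟨u', hu', he⟩ | ⟨c, he⟩
      · rw [he] at hbt; simp only [BadT] at hbt; exact hbt hu'
      · rw [he] at hbt; simp only [BadT] at hbt
  -- occurrences of bad terms in the body of p are unique
  have huniqP : ∀ T : Term, BadT W T → ∀ a ∈ p.body, ∀ a' ∈ p.body, ∀ i i' : ℕ,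
      a.args[i]? = some T → a'.args[i']? = some T → a = a' ∧ i = i' := by
    intro T hT
    exact sum_unique_of_le_one (hinv.2.1 T hT)
  -- pointwise action of the unifier on U
  have hUpt : ∀ a ∈ U, ∀ a' ∈ U, a.args.length = a'.args.length ∧
      ∀ i : ℕ, ∀ t t', a.args[i]? = some t → a'.args[i]? = some t' → γ t = γ t' := by
    intro a ha a' ha'
    have := unif_pt (hmgu.1.2 a ha a' ha')
    exact ⟨this.2.1, this.2.2⟩
  -- uniqueness of anchors for bad terms
  have hanch_uniq : ∀ t (w w' : ℕ), BadT W t → AnchT U H t w → AnchT U H t w' → w = w' := by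
    rintro t w w' hbad ⟨i, a, ha, hai, hHi⟩ ⟨i', a', ha', hai', hHi'⟩
    rcases badT_cases hbad with ⟨u, rfl, hu⟩ | ⟨m, rfl⟩
    · by_cases hup : u ∈ p.vars
      · have haS : a ∈ S := by
          rcases hUmem a ha with h | heq
          · exact h
          · exfalso
            rw [heq] at hai
            have hmem : Term.var u ∈ H.args := List.mem_iff_getElem?.2 ⟨i, hai⟩
            rcases hHargs _ hmem with ⟨c, hc⟩ | ⟨w₀, hw₀, _⟩
            · exact Term.noConfusion hc
            · rw [Term.var.injEq] at hw₀
              exact hρp w₀ (hw₀ ▸ hup)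
        have haS' : a' ∈ S := by
          rcases hUmem a' ha' with h | heq
          · exact h
          · exfalso
            rw [heq] at hai'
            have hmem : Term.var u ∈ H.args := List.mem_iff_getElem?.2 ⟨i', hai'⟩
            rcases hHargs _ hmem with ⟨c, hc⟩ | ⟨w₀, hw₀, _⟩
            · exact Term.noConfusion hc
            · rw [Term.var.injEq] at hw₀
              exact hρp w₀ (hw₀ ▸ hup)
        obtain ⟨heq, hieq⟩ := huniqP _ hbad a (hSsub haS) a' (hSsub haS') i i' hai hai'
        subst heq; subst hieq
        rw [hHi] at hHi'
        exact Term.var.injEq _ _ ▸ (Option.some.injEq _ _ ▸ hHi')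
      · have haH : a = H := by
          rcases hUmem a ha with h | heq
          · exact absurd (hpbodyvar a (hSsub h) u (List.mem_iff_getElem?.2 ⟨i, hai⟩)) hup
          · exact heq
        have haH' : a' = H := by
          rcases hUmem a' ha' with h | heq
          · exact absurd (hpbodyvar a' (hSsub h) u (List.mem_iff_getElem?.2 ⟨i', hai'⟩)) hup
          · exact heq
        rw [haH] at hai
        rw [haH'] at hai'
        rw [hai] at hHi
        rw [hai'] at hHi'
        have e1 : w = u := by
          have := Option.some.injEq _ _ ▸ hHi
          exact (Term.var.injEq _ _ ▸ this.symm)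
        have e2 : w' = u := by
          have := Option.some.injEq _ _ ▸ hHi'
          exact (Term.var.injEq _ _ ▸ this.symm)
        rw [e1, e2]
    · -- nulls never occur in H
      have haS : a ∈ S := by
        rcases hUmem a ha with h | heq
        · exact h
        · exfalso
          rw [heq] at hai
          have hmem : Term.null m ∈ H.args := List.mem_iff_getElem?.2 ⟨i, hai⟩
          rcases hHargs _ hmem with ⟨c, hc⟩ | ⟨w₀, hw₀, _⟩
          · exact Term.noConfusion hc
          · exact Term.noConfusion hw₀
      have haS' : a' ∈ S := by
        rcases hUmem a' ha' with h | heq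
        · exact h
        · exfalso
          rw [heq] at hai'
          have hmem : Term.null m ∈ H.args := List.mem_iff_getElem?.2 ⟨i', hai'⟩
          rcases hHargs _ hmem with ⟨c, hc⟩ | ⟨w₀, hw₀, _⟩
          · exact Term.noConfusion hc
          · exact Term.noConfusion hw₀
      obtain ⟨heq, hieq⟩ := huniqP _ hbad a (hSsub haS) a' (hSsub haS') i i' hai hai'
      subst heq; subst hieq
      rw [hHi] at hHi'
      exact Term.var.injEq _ _ ▸ (Option.some.injEq _ _ ▸ hHi')
  -- FR is an equivalence relation containing the columns of U, inside ker γ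
  have hreflF : ∀ t, FR W γ U H t t := fun t => ⟨rfl, Or.inl rfl⟩
  have hsymmF : ∀ t t', FR W γ U H t t' → FR W γ U H t' t := by
    rintro t t' ⟨he, h⟩
    refine ⟨he.symm, ?_⟩
    rcases h with rfl | hg | ⟨w, h1, h2⟩
    · exact Or.inl rfl
    · exact Or.inr (Or.inl (he ▸ hg))
    · exact Or.inr (Or.inr ⟨w, h2, h1⟩)
  have htransF : ∀ t₁ t₂ t₃, FR W γ U H t₁ t₂ → FR W γ U H t₂ t₃ → FR W γ U H t₁ t₃ := by
    rintro t₁ t₂ t₃ ⟨he12, h12⟩ ⟨he23, h23⟩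
    refine ⟨he12.trans he23, ?_⟩
    by_cases hgood : BadT W (γ t₁)
    swap
    · exact Or.inr (Or.inl hgood)
    rcases h12 with rfl | hg | ⟨w, ha1, ha2⟩
    · rcases h23 with rfl | hg | ⟨w, hb1, hb2⟩
      · exact Or.inl rfl
      · exact absurd hgood hg
      · exact Or.inr (Or.inr ⟨w, hb1, hb2⟩)
    · exact absurd hgood hg
    · rcases h23 with rfl | hg | ⟨w', hb1, hb2⟩
      · exact Or.inr (Or.inr ⟨w, ha1, ha2⟩)
      · exact absurd (he12 ▸ hgood) hg
      · have hbad2 : BadT W t₂ := hBad_pre t₂ (he12 ▸ hgood)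
        have hww' : w = w' := hanch_uniq t₂ w w' hbad2 ha2 hb1
        exact Or.inr (Or.inr ⟨w, ha1, hww' ▸ hb2⟩)
  have hsubF : ∀ t t', FR W γ U H t t' → γ t = γ t' := fun _ _ h => h.1
  have hcolF : ∀ a ∈ U, ∀ a' ∈ U, ∀ i : ℕ, ∀ t t', a.args[i]? = some t →
      a'.args[i]? = some t' → FR W γ U H t t' := by
    intro a ha a' ha' i t t' hai hai'
    have he : γ t = γ t' := (hUpt a ha a' ha').2 i t t' hai hai'
    refine ⟨he, ?_⟩
    by_cases hgood : BadT W (γ t)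
    swap
    · exact Or.inr (Or.inl hgood)
    -- H has an entry at position i, which must be a ρ-variable
    have hlen : a.args.length = H.args.length := (hUpt a ha H hHU).1
    have hilt : i < a.args.length := by
      by_contra hc
      rw [List.getElem?_eq_none (by omega)] at hai
      cases hai
    obtain ⟨tH, htH⟩ : ∃ tH, H.args[i]? = some tH :=
      ⟨_, List.getElem?_eq_getElem (by omega)⟩
    have heH : γ t = γ tH := (hUpt a ha H hHU).2 i t tH hai htH
    have hbadH : BadT W (γ tH) := heH ▸ hgood
    rcases hHargs tH (List.mem_iff_getElem?.2 ⟨i, htH⟩) with ⟨c, rfl⟩ | ⟨w, rfl, _⟩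
    · rw [hcf c] at hbadH
      exact absurd hbadH (by simp [BadT])
    · exact Or.inr (Or.inr ⟨ρ w, ⟨i, a, ha, hai, htH⟩, ⟨i, a', ha', hai', htH⟩⟩)
  have hkern : ∀ t t', γ t = γ t' → FR W γ U H t t' :=
    fun t t' h => mgu_kern hmgu hreflF hsymmF htransF hsubF hcolF h
  -- a body variable of σ whose ρ-image is mapped to a bad term is marked
  have hmark : ∀ w : ℕ, w ∈ varsOfSet σ.body → BadT W (γ (Term.var (ρ w))) →
      Marked Sig σ w := by
    intro w hwbody hbad
    by_cases hin : ρ w ∈ varsOfSet U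
    · -- ρ w occurs in H, so w is a head variable of σ; use propagation
      obtain ⟨a, haU, hmem⟩ := mem_varsOfSet.1 hin
      have haH : a = H := by
        rcases hUmem a haU with h | rfl
        · exact absurd (hpbodyvar a (hSsub h) (ρ w) hmem) (hρp w)
        · rfl
      subst haH
      have hwhead : w ∈ σ.head.vars := by
        rcases hHargs _ hmem with ⟨c, hc⟩ | ⟨w₀, hw₀, hmem₀⟩
        · exact Term.noConfusion hc
        · rw [Term.var.injEq] at hw₀
          rw [hρinj hw₀]
          exact var_mem_vars.2 hmem₀
      obtain ⟨a₀, ha₀⟩ := hSne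
      have ha₀U : a₀ ∈ U := Finset.mem_union_left _ ha₀
      -- at every position where w occurs in head(σ), a₀ carries a bad term
      have hbadpos : ∀ i : ℕ, σ.head.args[i]? = some (Term.var w) →
          ∃ t, a₀.args[i]? = some t ∧ BadT W t := by
        intro i hi
        have hHi : H.args[i]? = some (Term.var (ρ w)) := by
          show (σ.head.args.map (renT ρ))[i]? = _
          rw [List.getElem?_map, hi]
          rfl
        have hlen : a₀.args.length = H.args.length := (hUpt a₀ ha₀U H hHU).1
        have hilt : i < H.args.length := by
          by_contra hc
          rw [List.getElem?_eq_none (by omega)] at hHi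
          cases hHi
        obtain ⟨t, ht⟩ : ∃ t, a₀.args[i]? = some t :=
          ⟨_, List.getElem?_eq_getElem (by omega)⟩
        have heq : γ t = γ (Term.var (ρ w)) := (hUpt a₀ ha₀U H hHU).2 i t _ ht hHi
        exact ⟨t, ht, hBad_pre t (heq ▸ hbad)⟩
      -- trigger the support of a₀
      obtain ⟨i₀, hi₀⟩ := List.mem_iff_getElem?.1 (var_mem_vars.1 hwhead)
      obtain ⟨t₀, ht₀, hbt₀⟩ := hbadpos i₀ hi₀
      obtain ⟨σ', hσ', b, hb, hsup⟩ := hinv.2.2 a₀ (hSsub ha₀) ⟨i₀, t₀, ht₀, hbt₀⟩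
      have hall : ∀ i : ℕ, ∃ w' : ℕ, σ.head.args[i]? = some (Term.var w) →
          b.args[i]? = some (Term.var w') ∧ Marked Sig σ' w' := by
        intro i
        by_cases hi : σ.head.args[i]? = some (Term.var w)
        · obtain ⟨t, ht, hbt⟩ := hbadpos i hi
          obtain ⟨w', hw', hm'⟩ := hsup i t ht hbt
          exact ⟨w', fun _ => ⟨hw', hm'⟩⟩
        · exact ⟨0, fun hc => absurd hc hi⟩
      choose u hu using hall
      exact Marked.prop b u hσ hσ' hwbody hwhead hb
        (fun i hi => (hu i hi).1) (fun i hi => (hu i hi).2)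
    · -- ρ w does not occur in U: γ fixes it, and w is marked initially
      have hfix : γ (Term.var (ρ w)) = Term.var (ρ w) := hid (ρ w) hin
      have hwnothead : w ∉ σ.head.vars := by
        intro hc
        apply hin
        apply mem_varsOfSet.2
        refine ⟨H, hHU, ?_⟩
        show Term.var (ρ w) ∈ σ.head.args.map (renT ρ)
        exact List.mem_map.2 ⟨Term.var w, var_mem_vars.1 hc, rfl⟩
      exact Marked.init hσ hwbody hwnothead
  -- classification of occurrences of γ-preimages of bad terms in the new body
  subst hq'
  set M : Finset Atom := p.body \ S ∪ (σ.rename ρ).body with hM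
  have hoccM : ∀ a ∈ M, ∀ (i : ℕ) (t : Term), a.args[i]? = some t → BadT W (γ t) →
      (a ∈ p.body ∧ a ∉ S ∧ BadT W t ∧
        ((∃ u, t = Term.var u ∧ u ∈ p.vars) ∨ ∃ m, t = Term.null m)) ∨
      (∃ w b, b ∈ σ.body ∧ a = b.subst (renT ρ) ∧ t = Term.var (ρ w) ∧
        b.args[i]? = some (Term.var w)) := by
    intro a ha i t ht hbt
    rcases Finset.mem_union.1 ha with hp | hB
    · left
      have hps := Finset.mem_sdiff.1 hp
      have htmem : t ∈ a.args := List.mem_iff_getElem?.2 ⟨i, ht⟩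
      have hbadt := hBad_pre t hbt
      refine ⟨hps.1, hps.2, hbadt, ?_⟩
      rcases badT_cases hbadt with ⟨u, rfl, _⟩ | ⟨m, rfl⟩
      · exact Or.inl ⟨u, rfl, hpbodyvar a hps.1 u htmem⟩
      · exact Or.inr ⟨m, rfl⟩
    · right
      obtain ⟨b, hb, rfl⟩ := Finset.mem_image.1 hB
      rw [subst_getElem?] at ht
      obtain ⟨s, hs, hst⟩ := Option.map_eq_some_iff.1 ht
      cases s with
      | const c =>
        exfalso
        have hrc : renT ρ (Term.const c) = Term.const c := rfl
        rw [← hst, hrc, hcf c] at hbt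
        simp [BadT] at hbt
      | null m =>
        exact absurd ((hno σ hσ).1 b hb _ (List.mem_iff_getElem?.2 ⟨i, hs⟩))
          (by simp [Term.noNull])
      | var w => exact ⟨w, b, hb, rfl, hst.symm, hs⟩
  -- anchored occurrences in M are head variables themselves
  have hanch_shape : ∀ a ∈ M, ∀ (i : ℕ) (t : Term), a.args[i]? = some t →
      BadT W (γ t) → ∀ w : ℕ, AnchT U H t w → t = Term.var w := by
    intro a ha i t ht hbt w hanch
    obtain ⟨i₁, a₁, ha₁, hai₁, hHi₁⟩ := hanch
    rcases hoccM a ha i t ht hbt with ⟨hap, hanS, hbadt, hshape⟩ |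
      ⟨w₁, b, hb, haB, rfl, hbw⟩
    · exfalso
      have ha₁S : a₁ ∈ S := by
        rcases hUmem a₁ ha₁ with h | heq
        · exact h
        · exfalso
          rw [heq] at hai₁
          have hmem : t ∈ H.args := List.mem_iff_getElem?.2 ⟨i₁, hai₁⟩
          rcases hshape with ⟨u, rfl, hup⟩ | ⟨m, rfl⟩
          · rcases hHargs _ hmem with ⟨c, hc⟩ | ⟨w₀, hw₀, _⟩
            · exact Term.noConfusion hc
            · rw [Term.var.injEq] at hw₀
              exact hρp w₀ (hw₀ ▸ hup)
          · rcases hHargs _ hmem with ⟨c, hc⟩ | ⟨w₀, hw₀, _⟩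
            · exact Term.noConfusion hc
            · exact Term.noConfusion hw₀
      obtain ⟨heq, _⟩ := huniqP t hbadt a hap a₁ (hSsub ha₁S) i i₁ ht hai₁
      rw [heq] at hanS
      exact hanS ha₁S
    · have ha₁H : a₁ = H := by
        rcases hUmem a₁ ha₁ with h | heq
        · exact absurd (hpbodyvar a₁ (hSsub h) (ρ w₁)
            (List.mem_iff_getElem?.2 ⟨i₁, hai₁⟩)) (hρp w₁)
        · exact heq
      rw [ha₁H] at hai₁
      rw [hai₁] at hHi₁
      exact Option.some_inj.mp hHi₁
  -- any two occurrences of a bad term in the new body coincide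
  have hpair : ∀ T : Term, BadT W T →
      ∀ a₁ ∈ M.image (Atom.subst γ), ∀ a₂ ∈ M.image (Atom.subst γ), ∀ i i' : ℕ,
        a₁.args[i]? = some T → a₂.args[i']? = some T → a₁ = a₂ ∧ i = i' := by
    intro T hT a₁ ha₁ a₂ ha₂ i i' hi hi'
    obtain ⟨a, ha, rfl⟩ := Finset.mem_image.1 ha₁
    obtain ⟨a', ha', rfl⟩ := Finset.mem_image.1 ha₂
    rw [subst_getElem?] at hi hi'
    obtain ⟨t, ht, hgt⟩ := Option.map_eq_some_iff.1 hi
    obtain ⟨t', ht', hgt'⟩ := Option.map_eq_some_iff.1 hi'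
    have hbt : BadT W (γ t) := hgt ▸ hT
    have hbt' : BadT W (γ t') := hgt' ▸ hT
    by_cases htt : t = t'
    · subst htt
      rcases hoccM a ha i t ht hbt with ⟨hap, hanS, hbadt, hshape⟩ |
        ⟨w₁, b₁, hb₁, haB₁, hform₁, hbw₁⟩
      · rcases hoccM a' ha' i' t ht' hbt' with ⟨hap', _, _, _⟩ |
          ⟨w₂, b₂, hb₂, haB₂, hform₂, hbw₂⟩
        · obtain ⟨heq, hieq⟩ := huniqP t hbadt a hap a' hap' i i' ht ht'
          exact ⟨heq ▸ rfl, hieq⟩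
        · exfalso
          rcases hshape with ⟨u, rfl, hup⟩ | ⟨m, rfl⟩
          · rw [Term.var.injEq] at hform₂
            exact hρp w₂ (hform₂ ▸ hup)
          · exact Term.noConfusion hform₂
      · rcases hoccM a' ha' i' t ht' hbt' with ⟨hap', _, _, hshape'⟩ |
          ⟨w₂, b₂, hb₂, haB₂, hform₂, hbw₂⟩
        · exfalso
          rcases hshape' with ⟨u, hfu, hup⟩ | ⟨m, hfm⟩
          · rw [hform₁, Term.var.injEq] at hfu
            exact hρp w₁ (hfu ▸ hup)
          · rw [hform₁] at hfm
            exact Term.noConfusion hfm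
        · -- both occurrences come from the TGD body
          have hww : w₁ = w₂ := by
            apply hρinj
            rw [hform₁] at hform₂
            exact Term.var.injEq _ _ ▸ hform₂
          subst hww
          have hwbody : w₁ ∈ varsOfSet σ.body :=
            mem_varsOfSet.2 ⟨b₁, hb₁, List.mem_iff_getElem?.2 ⟨i, hbw₁⟩⟩
          have hmk : Marked Sig σ w₁ := hmark w₁ hwbody (hform₁ ▸ hbt)
          have hst := hsticky σ hσ w₁ hmk
          simp only [Atom.countVar] at hst
          obtain ⟨hbeq, hieq⟩ := sum_unique_of_le_one (M := σ.body)
            (T := Term.var w₁) (by omega) b₁ hb₁ b₂ hb₂ i i' hbw₁ hbw₂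
          refine ⟨?_, hieq⟩
          rw [haB₁, haB₂, hbeq]
    · exfalso
      have hFR := hkern t t' (hgt.trans hgt'.symm)
      rcases hFR.2 with rfl | hgood | ⟨w, hA, hA'⟩
      · exact htt rfl
      · exact hgood hbt
      · have e1 := hanch_shape a ha i t ht hbt w hA
        have e2 := hanch_shape a' ha' i' t' ht' hbt' w hA'
        exact htt (e1.trans e2.symm)
  -- assemble the invariant for the rewritten query
  refine ⟨?_, ?_, ?_⟩
  · intro t' ht' hbad
    obtain ⟨t, htm, rfl⟩ := List.mem_map.1 ht'
    exact (hinv.1 t htm) (hBad_pre t hbad)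
  · intro T hT
    exact sum_le_one_of_unique (hpair T hT)
  · intro a' ha' htrig
    obtain ⟨a, ha, rfl⟩ := Finset.mem_image.1 ha'
    obtain ⟨j₀, t₀', hj₀, hb₀⟩ := htrig
    rw [subst_getElem?] at hj₀
    obtain ⟨t₀, ht₀, hgt₀⟩ := Option.map_eq_some_iff.1 hj₀
    rcases Finset.mem_union.1 ha with hp | hB
    · have hps := Finset.mem_sdiff.1 hp
      obtain ⟨σ', hσ', b, hb, hsup⟩ :=
        hinv.2.2 a hps.1 ⟨j₀, t₀, ht₀, hBad_pre t₀ (hgt₀ ▸ hb₀)⟩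
      refine ⟨σ', hσ', b, hb, ?_⟩
      intro j t₂ hj hbad
      rw [subst_getElem?] at hj
      obtain ⟨t, ht, hgt⟩ := Option.map_eq_some_iff.1 hj
      exact hsup j t ht (hBad_pre t (hgt ▸ hbad))
    · obtain ⟨b, hb, rfl⟩ := Finset.mem_image.1 hB
      refine ⟨σ, hσ, b, hb, ?_⟩
      intro j t₂ hj hbad
      rw [subst_getElem?] at hj
      obtain ⟨t, ht, hgt⟩ := Option.map_eq_some_iff.1 hj
      rw [subst_getElem?] at ht
      obtain ⟨s, hs, hst⟩ := Option.map_eq_some_iff.1 ht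
      cases s with
      | const c =>
        exfalso
        have hrc : renT ρ (Term.const c) = Term.const c := rfl
        rw [← hgt, ← hst, hrc, hcf c] at hbad
        simp [BadT] at hbad
      | null m =>
        exact absurd ((hno σ hσ).1 b hb _ (List.mem_iff_getElem?.2 ⟨j, hs⟩))
          (by simp [Term.noNull])
      | var w =>
        refine ⟨w, hs, ?_⟩
        apply hmark w (mem_varsOfSet.2 ⟨b, hb, List.mem_iff_getElem?.2 ⟨j, hs⟩⟩)
        have hre : renT ρ (Term.var w) = Term.var (ρ w) := rfl
        rw [hre] at hst
        rw [hst, hgt]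
        exact hbad

/-- the over-approximation of the kernel of the MGU used in a factorization step -/
def FC (W : Finset ℕ) (γ : Term → Term) (S : Finset Atom) (t t' : Term) : Prop :=
  γ t = γ t' ∧ (t = t' ∨ ¬ BadT W (γ t) ∨
    ∃ j : ℕ, ∃ a₁ ∈ S, ∃ a₂ ∈ S, a₁.args[j]? = some t ∧ a₂.args[j]? = some t')

lemma inv_fact {Sig : Finset TGD} {W : Finset ℕ} {p p' : CQ}
    (hinv : Inv Sig W p)
    (hstep : IsFactStep Sig W p p') : Inv Sig W p' := by
  classical
  obtain ⟨σf, hσf, S, hfac, γ, hmgu, hid, hprot, hq'⟩ := hstep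
  subst hq'
  have hcf : constFix γ := hmgu.1.1
  have hSsub : S ⊆ p.body := hfac.1
  -- badness is reflected by γ
  have hBad_pre : ∀ t, BadT W (γ t) → BadT W t := by
    intro t hbt
    cases t with
    | const c => rw [hcf c] at hbt; exact absurd hbt (by simp [BadT])
    | null m => simp [BadT]
    | var u =>
      simp only [BadT]
      intro huW
      rcases hprot u huW with ⟨u', hu', he⟩ | ⟨c, he⟩
      · rw [he] at hbt; simp only [BadT] at hbt; exact hbt hu'
      · rw [he] at hbt; simp only [BadT] at hbt
  have huniqP : ∀ T : Term, BadT W T → ∀ a ∈ p.body, ∀ a' ∈ p.body, ∀ i i' : ℕ,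
      a.args[i]? = some T → a'.args[i']? = some T → a = a' ∧ i = i' := by
    intro T hT
    exact sum_unique_of_le_one (hinv.2.1 T hT)
  have hUpt : ∀ a ∈ S, ∀ a' ∈ S, a.args.length = a'.args.length ∧
      ∀ i : ℕ, ∀ t t', a.args[i]? = some t → a'.args[i]? = some t' → γ t = γ t' := by
    intro a ha a' ha'
    have := unif_pt (hmgu.1.2 a ha a' ha')
    exact ⟨this.2.1, this.2.2⟩
  -- FC is an equivalence relation containing the columns of S, inside ker γ
  have hreflF : ∀ t, FC W γ S t t := fun t => ⟨rfl, Or.inl rfl⟩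
  have hsymmF : ∀ t t', FC W γ S t t' → FC W γ S t' t := by
    rintro t t' ⟨he, h⟩
    refine ⟨he.symm, ?_⟩
    rcases h with rfl | hg | ⟨j, a₁, ha₁, a₂, ha₂, h1, h2⟩
    · exact Or.inl rfl
    · exact Or.inr (Or.inl (he ▸ hg))
    · exact Or.inr (Or.inr ⟨j, a₂, ha₂, a₁, ha₁, h2, h1⟩)
  have htransF : ∀ t₁ t₂ t₃, FC W γ S t₁ t₂ → FC W γ S t₂ t₃ → FC W γ S t₁ t₃ := by
    rintro t₁ t₂ t₃ ⟨he12, h12⟩ ⟨he23, h23⟩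
    refine ⟨he12.trans he23, ?_⟩
    by_cases hgood : BadT W (γ t₁)
    swap
    · exact Or.inr (Or.inl hgood)
    rcases h12 with rfl | hg | ⟨j, a₁, ha₁, a₂, ha₂, h1, h2⟩
    · rcases h23 with rfl | hg | ⟨j, a₁, ha₁, a₂, ha₂, h1, h2⟩
      · exact Or.inl rfl
      · exact absurd hgood hg
      · exact Or.inr (Or.inr ⟨j, a₁, ha₁, a₂, ha₂, h1, h2⟩)
    · exact absurd hgood hg
    · rcases h23 with rfl | hg | ⟨j', a₃, ha₃, a₄, ha₄, h3, h4⟩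
      · exact Or.inr (Or.inr ⟨j, a₁, ha₁, a₂, ha₂, h1, h2⟩)
      · exact absurd (he12 ▸ hgood) hg
      · have hbad2 : BadT W t₂ := hBad_pre t₂ (he12 ▸ hgood)
        obtain ⟨heq, hjeq⟩ := huniqP t₂ hbad2 a₂ (hSsub ha₂) a₃ (hSsub ha₃) j j' h2 h3
        exact Or.inr (Or.inr ⟨j, a₁, ha₁, a₄, ha₄, h1, by rw [hjeq]; exact h4⟩)
  have hsubF : ∀ t t', FC W γ S t t' → γ t = γ t' := fun _ _ h => h.1
  have hcolF : ∀ a ∈ S, ∀ a' ∈ S, ∀ i : ℕ, ∀ t t', a.args[i]? = some t →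
      a'.args[i]? = some t' → FC W γ S t t' := by
    intro a ha a' ha' i t t' hai hai'
    exact ⟨(hUpt a ha a' ha').2 i t t' hai hai',
      Or.inr (Or.inr ⟨i, a, ha, a', ha', hai, hai'⟩)⟩
  have hkern : ∀ t t', γ t = γ t' → FC W γ S t t' :=
    fun t t' h => mgu_kern hmgu hreflF hsymmF htransF hsubF hcolF h
  -- any two occurrences of a bad term in the new body coincide
  have hpair : ∀ T : Term, BadT W T →
      ∀ a₁ ∈ p.body.image (Atom.subst γ), ∀ a₂ ∈ p.body.image (Atom.subst γ),
      ∀ i i' : ℕ, a₁.args[i]? = some T → a₂.args[i']? = some T → a₁ = a₂ ∧ i = i' := by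
    intro T hT a₁ ha₁ a₂ ha₂ i i' hi hi'
    obtain ⟨a, ha, rfl⟩ := Finset.mem_image.1 ha₁
    obtain ⟨a', ha', rfl⟩ := Finset.mem_image.1 ha₂
    rw [subst_getElem?] at hi hi'
    obtain ⟨t, ht, hgt⟩ := Option.map_eq_some_iff.1 hi
    obtain ⟨t', ht', hgt'⟩ := Option.map_eq_some_iff.1 hi'
    have hbt : BadT W (γ t) := hgt ▸ hT
    have hbt' : BadT W (γ t') := hgt' ▸ hT
    by_cases htt : t = t'
    · subst htt
      obtain ⟨heq, hieq⟩ := huniqP t (hBad_pre t hbt) a ha a' ha' i i' ht ht'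
      exact ⟨heq ▸ rfl, hieq⟩
    · have hFC := hkern t t' (hgt.trans hgt'.symm)
      rcases hFC.2 with rfl | hgood | ⟨j, b₁, hb₁, b₂, hb₂, h1, h2⟩
      · exact absurd rfl htt
      · exact absurd hbt hgood
      · obtain ⟨hae, hie⟩ := huniqP t (hBad_pre t hbt) a ha b₁ (hSsub hb₁) i j ht h1
        obtain ⟨hae', hie'⟩ := huniqP t' (hBad_pre t' hbt') a' ha' b₂ (hSsub hb₂) i' j ht' h2
        refine ⟨?_, by omega⟩
        rw [hae, hae']
        exact hmgu.1.2 b₁ hb₁ b₂ hb₂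
  refine ⟨?_, ?_, ?_⟩
  · intro t' ht' hbad
    obtain ⟨t, htm, rfl⟩ := List.mem_map.1 ht'
    exact (hinv.1 t htm) (hBad_pre t hbad)
  · intro T hT
    exact sum_le_one_of_unique (hpair T hT)
  · intro a' ha' htrig
    obtain ⟨a, ha, rfl⟩ := Finset.mem_image.1 ha'
    obtain ⟨j₀, t₀', hj₀, hb₀⟩ := htrig
    rw [subst_getElem?] at hj₀
    obtain ⟨t₀, ht₀, hgt₀⟩ := Option.map_eq_some_iff.1 hj₀
    obtain ⟨σ', hσ', b, hb, hsup⟩ :=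
      hinv.2.2 a ha ⟨j₀, t₀, ht₀, hBad_pre t₀ (hgt₀ ▸ hb₀)⟩
    refine ⟨σ', hσ', b, hb, ?_⟩
    intro j t₂ hj hbad
    rw [subst_getElem?] at hj
    obtain ⟨t, ht, hgt⟩ := Option.map_eq_some_iff.1 hj
    exact hsup j t ht (hBad_pre t (hgt ▸ hbad))
/-- under a sticky set of TGDs in normal form, every variable of a
generated query that does not occur in the input query occurs exactly once. -/
theorem xrewrite_sticky_new_vars_once
    (R : Schema) (Sig : Finset TGD) (q : CQ)
    (hq : q.overSchema R)
    (hover : ∀ σ ∈ Sig, σ.overSchema R) (hnf : ∀ σ ∈ Sig, σ.NormalForm)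
    (hsticky : Sticky Sig) :
    ∀ q' : CQ, Reach Sig q.vars q q' →
      ∀ v ∈ q'.vars, v ∉ q.vars → q'.countVar v = 1 := by
  intro q' hreach
  have hno : ∀ σ ∈ Sig, (∀ a ∈ σ.body, ∀ t ∈ a.args, t.noNull) ∧
      ∀ t ∈ σ.head.args, t.noNull := by
    intro σ hσ
    exact ⟨fun a ha t ht => ((hover σ hσ).2.1 a ha).2 t ht, (hover σ hσ).2.2.2⟩
  have hbase : Inv Sig q.vars q := by
    refine ⟨?_, ?_, ?_⟩
    · intro t ht hbad
      rcases badT_cases hbad with ⟨u, rfl, hu⟩ | ⟨m, rfl⟩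
      · exact hu (Finset.mem_union_left _ (var_mem_vars.2 ht))
      · exact hq.2 _ ht
    · intro T hT
      have : ∑ a ∈ q.body, a.args.count T = 0 := by
        apply Finset.sum_eq_zero
        intro a ha
        apply List.count_eq_zero.2
        intro hmem
        rcases badT_cases hT with ⟨u, rfl, hu⟩ | ⟨m, rfl⟩
        · exact hu (Finset.mem_union_right _ (mem_varsOfSet.2 ⟨a, ha, hmem⟩))
        · exact (hq.1 a ha).2 _ hmem
      omega
    · rintro a ha ⟨j, t, hj, hbad⟩
      exfalso
      have hmem : t ∈ a.args := List.mem_iff_getElem?.2 ⟨j, hj⟩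
      rcases badT_cases hbad with ⟨u, rfl, hu⟩ | ⟨m, rfl⟩
      · exact hu (Finset.mem_union_right _ (mem_varsOfSet.2 ⟨a, ha, hmem⟩))
      · exact (hq.1 a ha).2 _ hmem
  have hinv : Inv Sig q.vars q' := by
    induction hreach with
    | refl => exact hbase
    | rw hr hstep ih => exact inv_rewrite hno hsticky ih hstep
    | fact hr hstep ih => exact inv_fact ih hstep
  intro v hv hvW
  have hbadv : BadT q.vars (Term.var v) := by simpa [BadT] using hvW
  have hhead : q'.head.args.count (Term.var v) = 0 := by
    apply List.count_eq_zero.2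
    intro hmem
    exact hinv.1 _ hmem hbadv
  have hsum : ∑ a ∈ q'.body, a.args.count (Term.var v) ≤ 1 := hinv.2.1 _ hbadv
  have hge : 1 ≤ ∑ a ∈ q'.body, a.args.count (Term.var v) := by
    rcases Finset.mem_union.1 hv with hH | hB
    · exact absurd (var_mem_vars.1 hH) (fun hm => hinv.1 _ hm hbadv)
    · obtain ⟨a, ha, hmem⟩ := mem_varsOfSet.1 hB
      have h1 : 0 < a.args.count (Term.var v) := List.count_pos_iff.2 hmem
      have h2 : a.args.count (Term.var v) ≤ ∑ a ∈ q'.body, a.args.count (Term.var v) :=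
        Finset.single_le_sum (f := fun x : Atom => x.args.count (Term.var v))
          (fun i _ => Nat.zero_le _) ha
      omega
  show q'.head.countVar v + ∑ a ∈ q'.body, a.countVar v = 1
  simp only [Atom.countVar]
  omega

end OntDB
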